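/- Let p be an odd prime, G a finitely generated free pro-p group, and U ≤ G an open subgroup of index p with d(G) = λ and d(U)^{ab} free. Suppose a Z_p-module X = U^{ab} carries commuting data: X ≅ X^+ ⊕ X^- as above for a dihedral action with rank_{Z_p} X^+ = λ_F, and rank_{Z_p} X^- ≤ λ + λ_F (as established via the φ-map and invariants bound). If 2λ_F ≤ (p-1)λ - p and λ ≥ 2, then rank_{Z_p} X ≤ pλ - p < pλ - p + 1 = d(U), a contradiction; hence such a free G cannot exist. -/

import Mathlib

/-- A pro-`p` group: a compact, totally disconnected topological group all of whose
open normal subgroups have `p`-power index. -/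
def IsProPGroup (p : ℕ) (G : Type) [Group G] [TopologicalSpace G] : Prop :=
  CompactSpace G ∧ TotallyDisconnectedSpace G ∧
    ∀ U : Subgroup G, U.Normal → IsOpen (U : Set G) →
      ∃ n : ℕ, Nat.card (G ⧸ U) = p ^ n

/-- A (finitely generated) free pro-`p` group: a pro-`p` group with a finite family of
topological generators satisfying the universal lifting property with respect to
finite `p`-groups (with the discrete topology). -/
def IsFreeProPGroup (p : ℕ) (G : Type) [Group G] [TopologicalSpace G]
    [IsTopologicalGroup G] : Prop :=
  IsProPGroup p G ∧
  ∃ (n : ℕ) (x : Fin n → G),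
    (Subgroup.closure (Set.range x)).topologicalClosure = ⊤ ∧
    ∀ (H : Type) [Group H] [Fintype H],
      (∃ m : ℕ, Nat.card H = p ^ m) →
      ∀ f : Fin n → H, ∃! φ : G →* H, @Continuous G H _ ⊥ φ ∧ ∀ i, φ (x i) = f i

/-- Continuous (i.e. locally constant) homomorphisms `G → 𝔽_p`; for a pro-`p` group
this is `H¹(G, 𝔽_p)`. -/
def oneCocycles (p : ℕ) (G : Type) [Group G] [TopologicalSpace G] :
    Submodule (ZMod p) (LocallyConstant G (ZMod p)) where
  carrier := {f | ∀ g h : G, f (g * h) = f g + f h}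
  add_mem' := by
    intro a b ha hb g h
    simp only [LocallyConstant.add_apply, ha g h, hb g h]
    ring
  zero_mem' := by intro g h; simp
  smul_mem' := by
    intro c a ha g h
    simp only [LocallyConstant.smul_apply, ha g h, smul_add]

/-- The generator rank `d(G) = dim_{𝔽_p} H¹(G, 𝔽_p)` of a pro-`p` group. -/
noncomputable def dRank (p : ℕ) (G : Type) [Group G] [TopologicalSpace G] : ℕ :=
  Module.finrank (ZMod p) (oneCocycles p G)

/-- The maximal abelian (Hausdorff) quotient of a topological group: the quotient by the
closure of the commutator subgroup. -/
abbrev proAbelianization (G : Type) [Group G] [TopologicalSpace G] [IsTopologicalGroup G] :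
    Type :=
  G ⧸ (commutator G).topologicalClosure


section Helpers

variable {G : Type} [Group G] [TopologicalSpace G] [IsTopologicalGroup G]

/-- A homomorphism with open kernel is locally constant. -/
lemma isLC_of_ker_open {H : Type} [Group H] (φ : G →* H)
    (h : IsOpen {g : G | φ g = 1}) : IsLocallyConstant (φ : G → H) := by
  rw [IsLocallyConstant.iff_isOpen_fiber]
  intro y
  have : φ ⁻¹' {y} = ⋃ g₀ : φ ⁻¹' {y}, (fun g => (g₀ : G)⁻¹ * g) ⁻¹' {g : G | φ g = 1} := by
    ext g
    simp only [Set.mem_preimage, Set.mem_singleton_iff, Set.mem_iUnion, Set.mem_setOf_eq,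
      map_mul, map_inv]
    constructor
    · intro hg
      exact ⟨⟨g, hg⟩, by simp [hg]⟩
    · rintro ⟨⟨g₀, hg₀⟩, hg⟩
      simp only at hg
      have : φ g = φ g₀ := by
        have := congrArg (fun z => φ g₀ * z) hg
        simpa [mul_assoc] using this
      rw [this, hg₀]
  rw [this]
  exact isOpen_iUnion fun g₀ => (continuous_const.mul continuous_id).isOpen_preimage _ h

/-- A locally constant homomorphism that kills topological generators is trivial. -/
lemma hom_eq_one_of_dense {n : ℕ} {x : Fin n → G}
    (hdense : (Subgroup.closure (Set.range x)).topologicalClosure = ⊤)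
    {H : Type} [Group H] (φ : G →* H) (hlc : IsLocallyConstant (φ : G → H))
    (hx : ∀ i, φ (x i) = 1) : ∀ g, φ g = 1 := by
  have hker_closed : IsClosed (φ.ker : Set G) := by
    have : (φ.ker : Set G) = {g : G | φ g = 1} := by
      ext g; simp [MonoidHom.mem_ker]
    rw [this]
    exact hlc.isClosed_fiber 1
  have h1 : Subgroup.closure (Set.range x) ≤ φ.ker := by
    rw [Subgroup.closure_le]
    rintro g ⟨i, rfl⟩
    exact hx i
  have h2 : (Subgroup.closure (Set.range x)).topologicalClosure ≤ φ.ker :=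
    Subgroup.topologicalClosure_minimal _ h1 hker_closed
  rw [hdense] at h2
  intro g
  exact h2 (Subgroup.mem_top g)

end Helpers

/-- An additive homomorphism `ℤ_p^m →+ ZMod p` vanishing on the standard basis is zero. -/
lemma padic_hom_eq_zero {p m : ℕ} [Fact p.Prime]
    (g : (Fin m → ℤ_[p]) →+ ZMod p) (h : ∀ i, g (Pi.single i 1) = 0) : g = 0 := by
  have key : ∀ (i : Fin m) (z : ℤ_[p]), g (Pi.single i z) = 0 := by
    intro i z
    set c : ℕ := (PadicInt.toZMod z).val with hc
    have hz : PadicInt.toZMod (z - (c : ℤ_[p])) = 0 := by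
      rw [map_sub, map_natCast, hc, ZMod.natCast_val, ZMod.cast_id, sub_self]
    have hmem : z - (c : ℤ_[p]) ∈ Ideal.span {(p : ℤ_[p])} := by
      have := PadicInt.ker_toZMod (p := p)
      rw [PadicInt.maximalIdeal_eq_span_p] at this
      rw [← this]
      exact hz
    rw [Ideal.mem_span_singleton] at hmem
    obtain ⟨y, hy⟩ := hmem
    have hzdecomp : z = (c : ℤ_[p]) + (p : ℤ_[p]) * y := by
      rw [← hy]; ring
    rw [hzdecomp]
    have e1 : Pi.single (M := fun _ : Fin m => ℤ_[p]) i ((c : ℤ_[p]) + (p : ℤ_[p]) * y)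
        = c • Pi.single i (1 : ℤ_[p]) + p • Pi.single i y := by
      ext j
      by_cases hij : j = i
      · subst hij; simp [Pi.single_eq_same, nsmul_eq_mul]
      · simp [Pi.single_eq_of_ne hij]
    rw [e1, map_add, map_nsmul, map_nsmul, h i]
    simp [nsmul_eq_mul, ZMod.natCast_self]
  ext i z
  simpa using key i z

/-- An open subgroup of index `p` in a "pro-p" group is normal. -/
lemma normal_of_index_p {p : ℕ} (hp : p.Prime) {G : Type} [Group G] [TopologicalSpace G]
    [IsTopologicalGroup G]
    (hpro : ∀ V : Subgroup G, V.Normal → IsOpen (V : Set G) → ∃ n, Nat.card (G ⧸ V) = p ^ n)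
    (U : Subgroup G) (hUopen : IsOpen (U : Set G)) (hU : U.index = p) : U.Normal := by
  have hcard : Nat.card (G ⧸ U) = p := by rw [← hU]; rfl
  have hfin : Finite (G ⧸ U) := Nat.finite_of_card_ne_zero (by rw [hcard]; exact hp.pos.ne')
  set N := U.normalCore with hN
  have hNopen : IsOpen (N : Set G) := by
    have hset : (N : Set G) = ⋂ q : G ⧸ U, {g : G | g • q = q} := by
      ext g
      simp only [Set.mem_iInter, Set.mem_setOf_eq, SetLike.mem_coe]
      rw [hN, Subgroup.normalCore_eq_ker, MonoidHom.mem_ker]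
      constructor
      · intro h q
        have h2 : (MulAction.toPermHom G (G ⧸ U)) g q = (1 : Equiv.Perm (G ⧸ U)) q := by rw [h]
        simpa [MulAction.toPermHom_apply] using h2
      · intro h; ext q; simpa [MulAction.toPermHom_apply] using h q
    rw [hset]
    apply isOpen_iInter_of_finite
    intro q
    induction q using QuotientGroup.induction_on with
    | H y =>
      have : {g : G | g • (QuotientGroup.mk y : G ⧸ U) = QuotientGroup.mk y}
          = (fun g : G => (g * y)⁻¹ * y) ⁻¹' (U : Set G) := by
        ext g
        simp only [Set.mem_setOf_eq, Set.mem_preimage, SetLike.mem_coe]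
        have hsm : g • (QuotientGroup.mk y : G ⧸ U) = QuotientGroup.mk (g * y) := rfl
        rw [hsm]
        exact QuotientGroup.eq
      rw [this]
      exact (((continuous_id.mul continuous_const).inv).mul continuous_const).isOpen_preimage
        _ hUopen
  obtain ⟨k, hk⟩ := hpro N U.normalCore_normal hNopen
  have hNindex : N.index = p ^ k := by rw [Subgroup.index]; exact hk
  have hdvd1 : p ∣ p ^ k := by
    rw [← hNindex, ← hU]
    exact Subgroup.index_dvd_of_le U.normalCore_le
  have hk1 : 1 ≤ k := by
    by_contra h
    push_neg at h
    interval_cases k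
    rw [pow_zero, Nat.dvd_one] at hdvd1
    have := hp.two_le
    omega
  have hdvd2 : p ^ k ∣ Nat.factorial p := by
    have e1 : Nat.card (G ⧸ N) = Nat.card (MulAction.toPermHom G (G ⧸ U)).range := by
      rw [hN, Subgroup.normalCore_eq_ker]
      exact Nat.card_congr (QuotientGroup.quotientKerEquivRange _).toEquiv
    have e2 : Nat.card (MulAction.toPermHom G (G ⧸ U)).range ∣ Nat.card (Equiv.Perm (G ⧸ U)) :=
      Subgroup.card_subgroup_dvd_card _
    have e3 : Nat.card (Equiv.Perm (G ⧸ U)) = Nat.factorial p := by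
      haveI := Fintype.ofFinite (G ⧸ U)
      haveI : DecidableEq (G ⧸ U) := Classical.decEq _
      rw [Nat.card_eq_fintype_card, Fintype.card_perm, ← hcard, Nat.card_eq_fintype_card]
    rw [← hk, e1, ← e3]
    exact e2
  have hk2 : k ≤ 1 := by
    by_contra h
    push_neg at h
    have hpp : p * p ∣ p ^ k := by
      have : p ^ 2 ∣ p ^ k := pow_dvd_pow p h
      simpa [pow_two] using this
    have : p * p ∣ p * Nat.factorial (p - 1) := by
      refine hpp.trans (hdvd2.trans ?_)
      have : p = (p - 1) + 1 := (Nat.succ_pred_eq_of_pos hp.pos).symm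
      rw [this, Nat.factorial_succ]
      simp
    have hpdvd : p ∣ Nat.factorial (p - 1) := (Nat.mul_dvd_mul_iff_left hp.pos).mp this
    have := (Nat.Prime.dvd_factorial hp).mp hpdvd
    have h2 := hp.two_le
    omega
  have hkeq : k = 1 := le_antisymm hk2 hk1
  have hNp : N.index = p := by rw [hNindex, hkeq, pow_one]
  have hrel : N.relIndex U * U.index = N.index := Subgroup.relIndex_mul_index U.normalCore_le
  rw [hNp, hU] at hrel
  have : N.relIndex U = 1 := by
    have hrel' : N.relIndex U * p = 1 * p := by rw [hrel, one_mul]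
    exact Nat.eq_of_mul_eq_mul_right hp.pos hrel'
  have hUN : U ≤ N := Subgroup.relIndex_eq_one.mp this
  have : U.normalCore = U := le_antisymm U.normalCore_le hUN
  rw [← this]
  exact U.normalCore_normal

open Multiplicative

section W

variable (p : ℕ)

/-- Translation action of `ZMod p` on functions `ZMod p → ZMod p`, multiplicatively. -/
def rhoAut (a : ZMod p) : Multiplicative (ZMod p → ZMod p) ≃* Multiplicative (ZMod p → ZMod p) where
  toFun m := ofAdd (fun x => toAdd m (x - a))
  invFun m := ofAdd (fun x => toAdd m (x + a))
  left_inv m := by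
    refine Multiplicative.toAdd.injective ?_
    funext x
    simp
  right_inv m := by
    refine Multiplicative.toAdd.injective ?_
    funext x
    simp
  map_mul' m m' := by
    refine Multiplicative.toAdd.injective ?_
    funext x
    rfl

def rho : Multiplicative (ZMod p) →* MulAut (Multiplicative (ZMod p → ZMod p)) where
  toFun a := rhoAut p (toAdd a)
  map_one' := by
    ext m
    refine Multiplicative.toAdd.injective ?_
    simp [rhoAut]
  map_mul' a b := by
    ext m
    refine Multiplicative.toAdd.injective ?_
    simp [rhoAut, MulAut.mul_def, sub_sub]

@[simp] lemma rho_apply (a : Multiplicative (ZMod p)) (m : Multiplicative (ZMod p → ZMod p))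
    (x : ZMod p) : toAdd (rho p a m) x = toAdd m (x - toAdd a) := rfl

abbrev Wgrp := SemidirectProduct (Multiplicative (ZMod p → ZMod p)) (Multiplicative (ZMod p))
  (rho p)

def wEquiv : Wgrp p ≃ ((ZMod p → ZMod p) × ZMod p) where
  toFun w := (toAdd w.left, toAdd w.right)
  invFun pr := ⟨ofAdd pr.1, ofAdd pr.2⟩
  left_inv w := by cases w; rfl
  right_inv pr := rfl

noncomputable instance [NeZero p] : Fintype (Wgrp p) := Fintype.ofEquiv _ (wEquiv p).symm

lemma card_Wgrp [Fact p.Prime] : Nat.card (Wgrp p) = p ^ (p + 1) := by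
  rw [Nat.card_congr (wEquiv p), Nat.card_prod, Nat.card_fun, Nat.card_zmod]
  ring

lemma w_pow_left (m₀ : ZMod p → ZMod p) (j : ℕ) :
    toAdd ((⟨ofAdd m₀, ofAdd 1⟩ : Wgrp p) ^ j).left
      = fun x => ∑ s ∈ Finset.range j, m₀ (x - (s : ZMod p)) := by
  induction j with
  | zero =>
    funext x
    rw [pow_zero]
    simp [SemidirectProduct.one_left]
  | succ j ih =>
    have hr : ((⟨ofAdd m₀, ofAdd 1⟩ : Wgrp p) ^ j).right = ofAdd ((j : ZMod p)) := by
      have : ((⟨ofAdd m₀, ofAdd 1⟩ : Wgrp p) ^ j).right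
          = SemidirectProduct.rightHom ((⟨ofAdd m₀, ofAdd 1⟩ : Wgrp p) ^ j) := rfl
      rw [this, map_pow]
      have : (SemidirectProduct.rightHom (⟨ofAdd m₀, ofAdd 1⟩ : Wgrp p)) = ofAdd (1 : ZMod p) :=
        rfl
      rw [this, ← ofAdd_nsmul]
      congr 1
      simp [nsmul_eq_mul]
    rw [pow_succ]
    funext x
    rw [SemidirectProduct.mul_left]
    have : toAdd ((( ⟨ofAdd m₀, ofAdd 1⟩ : Wgrp p) ^ j).left *
        (rho p (((⟨ofAdd m₀, ofAdd 1⟩ : Wgrp p) ^ j).right) (ofAdd m₀)))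
        = toAdd ((⟨ofAdd m₀, ofAdd 1⟩ : Wgrp p) ^ j).left +
          toAdd (rho p (((⟨ofAdd m₀, ofAdd 1⟩ : Wgrp p) ^ j).right) (ofAdd m₀)) := rfl
    rw [this]
    simp only [Pi.add_apply, ih, hr, rho_apply, toAdd_ofAdd, Finset.sum_range_succ]

end W

section MainProof

open Multiplicative

/-- Continuity w.r.t. the bottom (discrete) topology on the target means locally constant. -/
lemma isLC_of_continuous_bot {α β : Type} [TopologicalSpace α] (f : α → β)
    (h : @Continuous α β _ ⊥ f) : IsLocallyConstant f := by
  intro s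
  letI : TopologicalSpace β := ⊥
  haveI : DiscreteTopology β := ⟨rfl⟩
  exact h.isOpen_preimage s (isOpen_discrete s)

lemma mem_oneCocycles_iff {p : ℕ} {G : Type} [Group G] [TopologicalSpace G]
    (f : LocallyConstant G (ZMod p)) :
    f ∈ oneCocycles p G ↔ ∀ g h : G, f (g * h) = f g + f h := Iff.rfl

/-- A `ZMod p`-valued cocycle as a monoid homomorphism to `Multiplicative (ZMod p)`. -/
def cocycleHom {p : ℕ} {H : Type} [Group H] (f : H → ZMod p)
    (hf : ∀ g h : H, f (g * h) = f g + f h) : H →* Multiplicative (ZMod p) where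
  toFun u := ofAdd (f u)
  map_one' := by
    have h1 := hf 1 1
    rw [one_mul] at h1
    have h2 : f 1 = 0 := left_eq_add.mp h1
    show ofAdd (f 1) = 1
    rw [h2, ofAdd_zero]
  map_mul' u v := by
    show ofAdd (f (u * v)) = ofAdd (f u) * ofAdd (f v)
    rw [hf u v, ofAdd_add]

lemma cocycleHom_lc {p : ℕ} {H : Type} [Group H] [TopologicalSpace H]
    (f : LocallyConstant H (ZMod p)) (hf : ∀ g h : H, f (g * h) = f g + f h) :
    IsLocallyConstant (⇑(cocycleHom (⇑f) hf)) :=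
  f.isLocallyConstant.comp ofAdd

lemma cocycleHom_ker_closed {p : ℕ} {H : Type} [Group H] [TopologicalSpace H]
    (f : LocallyConstant H (ZMod p)) (hf : ∀ g h : H, f (g * h) = f g + f h) :
    IsClosed (((cocycleHom (⇑f) hf).ker : Subgroup H) : Set H) := by
  have hset : (((cocycleHom (⇑f) hf).ker : Subgroup H) : Set H) = {u : H | f u = 0} := by
    ext u
    simp only [SetLike.mem_coe, MonoidHom.mem_ker, Set.mem_setOf_eq]
    show ofAdd (f u) = 1 ↔ f u = 0
    rw [← ofAdd_zero]
    exact Multiplicative.ofAdd.injective.eq_iff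
  rw [hset]
  exact f.isLocallyConstant.isClosed_fiber 0

/-- Group/module-theoretic core of Theorem 1.1: let `p` be an odd prime, `G` a finitely
generated free pro-`p` group with `d(G) = λ ≥ 2`, and `U` an open subgroup of index `p`
whose abelianization `X = U^{ab}` is a free `ℤ_p`-module of rank at most `λ + 2λ_F`
(as follows from the `φ`-map and the invariants bound, where `λ_F = rank X⁺`).
If `2λ_F ≤ (p-1)λ - p`, this contradicts the Schreier formula
`d(U) = p(λ-1) + 1`; hence such a free `G` cannot exist. -/
theorem stmt13 (p : ℕ) (hp : p.Prime) (hodd : Odd p) [Fact p.Prime]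
    (lam lamF : ℕ) (hlam : 2 ≤ lam) (hineq : 2 * lamF + p ≤ (p - 1) * lam)
    (G : Type) [Group G] [TopologicalSpace G] [IsTopologicalGroup G]
    (hfree : IsFreeProPGroup p G) (hdG : dRank p G = lam)
    (U : OpenSubgroup G) (hU : (U : Subgroup G).index = p)
    (m : ℕ) (hm : m ≤ lam + 2 * lamF)
    (hX : Nonempty (proAbelianization (U : Subgroup G) ≃*
      Multiplicative (Fin m → ℤ_[p]))) :
    False := by
  classical
  obtain ⟨e0⟩ := hX
  obtain ⟨⟨hcomp, htd, hpro⟩, n, x, hdense, huniv⟩ := hfree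
  haveI : Fact (1 < p) := ⟨hp.one_lt⟩
  -- Step 0: U is normal.
  haveI hUnormal : (U : Subgroup G).Normal := normal_of_index_p hp hpro _ U.isOpen hU
  -- Step 1: λ ≤ n.
  have hlam_le_n : lam ≤ n := by
    let evG : (oneCocycles p G) →ₗ[ZMod p] (Fin n → ZMod p) :=
      { toFun := fun F => fun i => (F : LocallyConstant G (ZMod p)) (x i)
        map_add' := fun F F' => by
          funext i
          simp [Submodule.coe_add, LocallyConstant.add_apply]
        map_smul' := fun c F => by
          funext i
          simp [Submodule.coe_smul, LocallyConstant.smul_apply] }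
    have hker : ∀ F : oneCocycles p G, evG F = 0 → F = 0 := by
      intro F hF
      have hmem := F.2
      rw [mem_oneCocycles_iff] at hmem
      have hlc := cocycleHom_lc _ hmem
      have hzero := hom_eq_one_of_dense hdense (cocycleHom _ hmem) hlc (fun i => by
        have hFi : (F : LocallyConstant G (ZMod p)) (x i) = 0 := congrFun hF i
        show ofAdd ((F : LocallyConstant G (ZMod p)) (x i)) = 1
        rw [hFi, ofAdd_zero])
      apply Subtype.ext
      apply DFunLike.ext
      intro g
      have hg := hzero g
      have : ofAdd ((F : LocallyConstant G (ZMod p)) g) = 1 := hg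
      rw [← ofAdd_zero] at this
      have := Multiplicative.ofAdd.injective this
      simpa using this
    have hinj : Function.Injective evG := by
      rw [← LinearMap.ker_eq_bot]
      exact LinearMap.ker_eq_bot'.mpr hker
    have h1 : Module.finrank (ZMod p) (oneCocycles p G) ≤
        Module.finrank (ZMod p) (Fin n → ZMod p) :=
      LinearMap.finrank_le_finrank_of_injective hinj
    rw [Module.finrank_fin_fun] at h1
    have h2 : Module.finrank (ZMod p) (oneCocycles p G) = lam := hdG
    omega
  -- Step 2: the quotient map π' : G → Multiplicative (ZMod p).
  have hcardQ : Nat.card (G ⧸ (U : Subgroup G)) = p := by rw [← hU]; rfl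
  have hcardC : Nat.card (Multiplicative (ZMod p)) = p := by
    rw [Nat.card_congr (Multiplicative.toAdd (α := ZMod p))]
    exact Nat.card_zmod p
  let e1 : (G ⧸ (U : Subgroup G)) ≃* Multiplicative (ZMod p) :=
    mulEquivOfPrimeCardEq hcardQ hcardC
  let π1 : G →* Multiplicative (ZMod p) := e1.toMonoidHom.comp (QuotientGroup.mk' (U : Subgroup G))
  have hπ1mem : ∀ g : G, (π1 g = 1 ↔ g ∈ (U : Subgroup G)) := by
    intro g
    show e1 (QuotientGroup.mk' (U : Subgroup G) g) = 1 ↔ _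
    rw [EmbeddingLike.map_eq_one_iff]
    exact QuotientGroup.eq_one_iff g
  have hπ1lc : IsLocallyConstant (⇑π1) := by
    apply isLC_of_ker_open
    have : {g : G | π1 g = 1} = ((U : Subgroup G) : Set G) := by
      ext g
      simpa using hπ1mem g
    rw [this]
    exact U.isOpen
  -- Step 3: find a generator not in U.
  have hex : ∃ i, π1 (x i) ≠ 1 := by
    by_contra hcon
    push_neg at hcon
    have hall := hom_eq_one_of_dense hdense π1 hπ1lc hcon
    obtain ⟨q, hq⟩ := e1.surjective (ofAdd (1 : ZMod p))
    obtain ⟨g, rfl⟩ := QuotientGroup.mk'_surjective (U : Subgroup G) q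
    have h1 : π1 g = ofAdd (1 : ZMod p) := hq
    rw [hall g] at h1
    have h2 : (1 : ZMod p) = 0 := by
      have := Multiplicative.ofAdd.injective (h1.symm.trans (ofAdd_zero).symm)
      simpa using this
    exact one_ne_zero h2
  obtain ⟨i₀, hi₀⟩ := hex
  set b : ZMod p := toAdd (π1 (x i₀)) with hbdef
  have hb : b ≠ 0 := by
    intro h
    apply hi₀
    rw [← ofAdd_toAdd (π1 (x i₀)), ← hbdef, h, ofAdd_zero]
  let sb : Multiplicative (ZMod p) ≃* Multiplicative (ZMod p) :=
    { toFun := fun z => ofAdd (b⁻¹ * toAdd z)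
      invFun := fun z => ofAdd (b * toAdd z)
      left_inv := fun z => by
        simp only [toAdd_ofAdd, ← mul_assoc, mul_inv_cancel₀ hb, one_mul, ofAdd_toAdd]
      right_inv := fun z => by
        simp only [toAdd_ofAdd, ← mul_assoc, inv_mul_cancel₀ hb, one_mul, ofAdd_toAdd]
      map_mul' := fun z w => by
        show ofAdd (b⁻¹ * toAdd (z * w)) = ofAdd (b⁻¹ * toAdd z) * ofAdd (b⁻¹ * toAdd w)
        rw [toAdd_mul, mul_add, ofAdd_add] }
  let π' : G →* Multiplicative (ZMod p) := sb.toMonoidHom.comp π1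
  have hπ'mem : ∀ g : G, (π' g = 1 ↔ g ∈ (U : Subgroup G)) := by
    intro g
    show sb (π1 g) = 1 ↔ _
    rw [EmbeddingLike.map_eq_one_iff]
    exact hπ1mem g
  have hπ'lc : IsLocallyConstant (⇑π') := hπ1lc.comp ⇑sb
  have hπ'i₀ : π' (x i₀) = ofAdd 1 := by
    show sb (π1 (x i₀)) = ofAdd 1
    rw [← ofAdd_toAdd (π1 (x i₀)), ← hbdef]
    show ofAdd (b⁻¹ * toAdd (ofAdd b)) = ofAdd 1
    rw [toAdd_ofAdd, inv_mul_cancel₀ hb]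
  set av : Fin n → ZMod p := fun i => toAdd (π' (x i)) with havdef
  have hπ'x : ∀ i, π' (x i) = ofAdd (av i) := fun i => (ofAdd_toAdd _).symm
  have havi₀ : av i₀ = 1 := by
    rw [havdef]
    simp only
    rw [hπ'i₀, toAdd_ofAdd]
  -- Step 4: the homomorphisms into the wreath-type group W.
  set T : Type := ({i : Fin n // i ≠ i₀} × ZMod p) ⊕ Unit with hT
  set mfun : T → Fin n → (ZMod p → ZMod p) := fun t i =>
    Sum.elim (fun ts : {i : Fin n // i ≠ i₀} × ZMod p =>
        if i = ts.1.1 then Pi.single (-ts.2) 1 else 0)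
      (fun _ : Unit => if i = i₀ then Pi.single 0 1 else 0) t with hmfun
  set fvec : T → Fin n → Wgrp p := fun t i => ⟨ofAdd (mfun t i), ofAdd (av i)⟩ with hfvec
  have hθ : ∀ t : T, ∃ φ : G →* Wgrp p,
      (@Continuous G (Wgrp p) _ ⊥ φ) ∧ ∀ i, φ (x i) = fvec t i :=
    fun t => ((huniv (Wgrp p) ⟨p + 1, card_Wgrp p⟩ (fvec t)).exists)
  choose Θ hΘc hΘx using hθ
  have hΘlc : ∀ t, IsLocallyConstant (⇑(Θ t)) := fun t => isLC_of_continuous_bot _ (hΘc t)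
  -- right components agree with π'
  have hright : ∀ t g, (Θ t g).right = π' g := by
    intro t
    set δ : G →* Multiplicative (ZMod p) :=
      (SemidirectProduct.rightHom.comp (Θ t)) * π'⁻¹ with hδ
    have hδcoe : (⇑δ : G → Multiplicative (ZMod p))
        = fun g => SemidirectProduct.rightHom (Θ t g) * (π' g)⁻¹ := rfl
    have hδlc : IsLocallyConstant (⇑δ) := by
      rw [hδcoe]
      exact ((hΘlc t).comp ⇑SemidirectProduct.rightHom).mul (hπ'lc.comp Inv.inv)
    have hδx : ∀ i, δ (x i) = 1 := by
      intro i
      show SemidirectProduct.rightHom (Θ t (x i)) * (π' (x i))⁻¹ = 1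
      rw [hΘx t i, hπ'x i]
      have : SemidirectProduct.rightHom (fvec t i) = ofAdd (av i) := rfl
      rw [this, mul_inv_cancel]
    have hδ1 := hom_eq_one_of_dense hdense δ hδlc hδx
    intro g
    have h1 : SemidirectProduct.rightHom (Θ t g) * (π' g)⁻¹ = 1 := hδ1 g
    have h2 : SemidirectProduct.rightHom (Θ t g) = π' g := mul_inv_eq_one.mp h1
    exact h2
  -- the cocycles on U
  set vf : T → (↥(U : Subgroup G) → ZMod p) := fun t u => toAdd ((Θ t ↑u).left) 0 with hvf
  have hvlc : ∀ t, IsLocallyConstant (vf t) := fun t =>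
    (((hΘlc t).comp_continuous continuous_subtype_val).comp
      (fun w : Wgrp p => toAdd w.left 0))
  have hvadd : ∀ t (u u' : ↥(U : Subgroup G)), vf t (u * u') = vf t u + vf t u' := by
    intro t u u'
    have hcoe : ((u * u' : ↥(U : Subgroup G)) : G) = (↑u : G) * ↑u' := rfl
    show toAdd ((Θ t ↑(u * u')).left) 0 = toAdd ((Θ t ↑u).left) 0 + toAdd ((Θ t ↑u').left) 0
    rw [hcoe, map_mul, SemidirectProduct.mul_left]
    have h1 : (Θ t ↑u).right = 1 := by rw [hright]; exact (hπ'mem ↑u).mpr u.2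
    rw [h1, map_one, MulAut.one_apply]
    rfl
  set v : T → LocallyConstant (↥(U : Subgroup G)) (ZMod p) := fun t => ⟨vf t, hvlc t⟩ with hv
  have hvmem : ∀ t, v t ∈ oneCocycles p (↥(U : Subgroup G)) := by
    intro t
    rw [mem_oneCocycles_iff]
    intro u u'
    exact hvadd t u u'
  -- Step 5: distinguished elements of U.
  set σ : G := x i₀ with hσ
  have hΘσ : ∀ t, Θ t σ = (⟨ofAdd (mfun t i₀), ofAdd 1⟩ : Wgrp p) := by
    intro t
    rw [hσ, hΘx t i₀, hfvec]
    simp only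
    rw [havi₀]
  have hσz : ∀ z : ℤ, (ofAdd (1 : ZMod p)) ^ z = ofAdd ((z : ZMod p)) := by
    intro z
    rw [← ofAdd_zsmul]
    congr 1
    rw [zsmul_eq_mul, mul_one]
  have hπ'σz : ∀ z : ℤ, π' (σ ^ z) = ofAdd ((z : ZMod p)) := by
    intro z
    rw [map_zpow, hπ'i₀, hσz]
  set wel : Fin n → ZMod p → G := fun i k =>
    σ ^ ((k.val : ℤ)) * x i * σ ^ (-(((k + av i).val : ℕ) : ℤ)) with hwel
  have hwelmem : ∀ i k, wel i k ∈ (U : Subgroup G) := by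
    intro i k
    rw [← hπ'mem]
    simp only [hwel]
    rw [map_mul, map_mul, hπ'σz, hπ'σz, hπ'x]
    rw [← ofAdd_add, ← ofAdd_add]
    have hc : (((k.val : ℕ) : ℤ) : ZMod p) + av i + (((-(((k + av i).val : ℕ) : ℤ)) : ℤ) : ZMod p)
        = 0 := by
      push_cast
      rw [ZMod.natCast_rightInverse k, ZMod.natCast_rightInverse (k + av i)]
      ring
    rw [hc, ofAdd_zero]
  set u0 : G := σ ^ p with hu0
  have hu0mem : u0 ∈ (U : Subgroup G) := by
    rw [← hπ'mem]
    simp only [hu0]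
    rw [map_pow, hπ'i₀, ← ofAdd_nsmul]
    have hc : p • (1 : ZMod p) = 0 := by
      simp [nsmul_eq_mul, ZMod.natCast_self]
    rw [hc, ofAdd_zero]
  -- Step 6: value computations.
  have htriple : ∀ (A C : Multiplicative (ZMod p)) (M : Multiplicative (ZMod p → ZMod p))
      (B : Multiplicative (ZMod p)),
      (SemidirectProduct.inr A * (⟨M, B⟩ : Wgrp p) * SemidirectProduct.inr C).left
        = rho p A M := by
    intro A C M B
    rw [SemidirectProduct.mul_left, SemidirectProduct.mul_left, SemidirectProduct.left_inr,
      SemidirectProduct.left_inr, SemidirectProduct.right_inr, one_mul, map_one, mul_one]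
  have hval_inl : ∀ (ts : {j : Fin n // j ≠ i₀} × ZMod p) (i : Fin n) (hi : i ≠ i₀) (k : ZMod p),
      vf (Sum.inl ts) ⟨wel i k, hwelmem i k⟩ = if ts = (⟨i, hi⟩, k) then 1 else 0 := by
    intro ts i hi k
    have hmix : mfun (Sum.inl ts) i₀ = 0 := by
      simp only [hmfun, Sum.elim_inl]
      rw [if_neg (fun h => ts.1.2 h.symm)]
    have hΘσt : Θ (Sum.inl ts) σ = SemidirectProduct.inr (ofAdd 1) := by
      rw [hΘσ, hmix]
      rfl
    show toAdd ((Θ (Sum.inl ts) (wel i k)).left) 0 = _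
    simp only [hwel]
    rw [map_mul, map_mul, map_zpow, map_zpow, hΘσt, hΘx (Sum.inl ts) i,
      ← map_zpow SemidirectProduct.inr, ← map_zpow SemidirectProduct.inr, hσz, hσz]
    simp only [hfvec]
    by_cases hcase : i = ts.1.1
    · have hm : mfun (Sum.inl ts) i = Pi.single (-ts.2) 1 := by
        simp only [hmfun, Sum.elim_inl]
        rw [if_pos hcase]
      rw [hm, htriple, rho_apply, toAdd_ofAdd, toAdd_ofAdd]
      have hc : (0 : ZMod p) - (((k.val : ℕ) : ℤ) : ZMod p) = -k := by
        push_cast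
        rw [ZMod.natCast_rightInverse k]
        ring
      rw [hc, Pi.single_apply]
      have hiff : (-k = -ts.2) ↔ (ts = (⟨i, hi⟩, k)) := by
        rw [neg_inj]
        constructor
        · intro h
          exact Prod.ext (Subtype.ext hcase.symm) h.symm
        · intro h
          rw [h]
      by_cases hkk : -k = -ts.2
      · rw [if_pos hkk, if_pos (hiff.mp hkk)]
      · rw [if_neg hkk, if_neg (fun h => hkk (hiff.mpr h))]
    · have hm : mfun (Sum.inl ts) i = 0 := by
        simp only [hmfun, Sum.elim_inl]
        rw [if_neg hcase]
      rw [hm]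
      have hmid : (⟨ofAdd (0 : ZMod p → ZMod p), ofAdd (av i)⟩ : Wgrp p)
          = SemidirectProduct.inr (ofAdd (av i)) := rfl
      rw [hmid, ← map_mul, ← map_mul, SemidirectProduct.left_inr]
      rw [if_neg (fun h => hcase (by rw [h]))]
      rfl
  have hval_inl_u0 : ∀ ts : {j : Fin n // j ≠ i₀} × ZMod p,
      vf (Sum.inl ts) ⟨u0, hu0mem⟩ = 0 := by
    intro ts
    have hmix : mfun (Sum.inl ts) i₀ = 0 := by
      simp only [hmfun, Sum.elim_inl]
      rw [if_neg (fun h => ts.1.2 h.symm)]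
    have hΘσt : Θ (Sum.inl ts) σ = SemidirectProduct.inr (ofAdd 1) := by
      rw [hΘσ, hmix]
      rfl
    show toAdd ((Θ (Sum.inl ts) (σ ^ p)).left) 0 = 0
    rw [map_pow, hΘσt, ← map_pow SemidirectProduct.inr, SemidirectProduct.left_inr]
    rfl
  have hval_inr_u0 : vf (Sum.inr ()) ⟨u0, hu0mem⟩ = 1 := by
    have hm : mfun (Sum.inr ()) i₀ = Pi.single 0 1 := by
      simp [hmfun]
    show toAdd ((Θ (Sum.inr ()) (σ ^ p)).left) 0 = 1
    rw [map_pow, hΘσ, hm]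
    rw [congrFun (w_pow_left p (Pi.single (0 : ZMod p) (1 : ZMod p)) p) 0]
    have hterm : ∀ s ∈ Finset.range p,
        (Pi.single (0 : ZMod p) (1 : ZMod p) : ZMod p → ZMod p) ((0 : ZMod p) - (s : ZMod p))
          = if s = 0 then 1 else 0 := by
      intro s hs
      rw [Finset.mem_range] at hs
      rw [zero_sub, Pi.single_apply]
      by_cases h : s = 0
      · subst h
        simp
      · rw [if_neg h, if_neg ?_]
        intro hcon
        rw [neg_eq_zero] at hcon
        rw [ZMod.natCast_eq_zero_iff] at hcon
        have := Nat.le_of_dvd (Nat.pos_of_ne_zero h) hcon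
        omega
    rw [Finset.sum_congr rfl hterm, Finset.sum_ite_eq' (Finset.range p) 0 (fun _ => (1 : ZMod p)),
      if_pos (Finset.mem_range.mpr hp.pos)]
  -- Step 7: linear independence.
  have hli : LinearIndependent (ZMod p) v := by
    rw [Fintype.linearIndependent_iff]
    intro g hg
    have hsum : ∀ u : ↥(U : Subgroup G), ∑ t : T, g t * vf t u = 0 := by
      intro u
      let E : LocallyConstant (↥(U : Subgroup G)) (ZMod p) →ₗ[ZMod p] ZMod p :=
        { toFun := fun f => f u
          map_add' := fun f f' => rfl
          map_smul' := fun c f => rfl }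
      have hE := congrArg E hg
      rw [map_sum, map_zero] at hE
      rw [← hE]
      apply Finset.sum_congr rfl
      intro t _
      rw [map_smul, smul_eq_mul]
      rfl
    have hgunit : g (Sum.inr ()) = 0 := by
      have h0 := hsum ⟨u0, hu0mem⟩
      rw [Fintype.sum_sum_type] at h0
      have h1 : ∀ ts ∈ (Finset.univ : Finset ({j : Fin n // j ≠ i₀} × ZMod p)),
          g (Sum.inl ts) * vf (Sum.inl ts) ⟨u0, hu0mem⟩ = 0 := by
        intro ts _
        rw [hval_inl_u0 ts, mul_zero]
      rw [Finset.sum_congr rfl h1, Finset.sum_const_zero, zero_add] at h0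
      simpa [hval_inr_u0] using h0
    intro t
    rcases t with ⟨⟨i, hi⟩, k⟩ | uu
    · have h0 := hsum ⟨wel i k, hwelmem i k⟩
      rw [Fintype.sum_sum_type] at h0
      have h1 : ∀ ts ∈ (Finset.univ : Finset ({j : Fin n // j ≠ i₀} × ZMod p)),
          g (Sum.inl ts) * vf (Sum.inl ts) ⟨wel i k, hwelmem i k⟩
            = if ts = (⟨i, hi⟩, k) then g (Sum.inl ts) else 0 := by
        intro ts _
        rw [hval_inl ts i hi k]
        by_cases h : ts = (⟨i, hi⟩, k)
        · rw [if_pos h, if_pos h, mul_one]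
        · rw [if_neg h, if_neg h, mul_zero]
      rw [Finset.sum_congr rfl h1,
        Finset.sum_ite_eq' Finset.univ ((⟨i, hi⟩, k) : {j : Fin n // j ≠ i₀} × ZMod p)
          (fun ts => g (Sum.inl ts)), if_pos (Finset.mem_univ _)] at h0
      have h2 : ∑ uu : Unit, g (Sum.inr uu) * vf (Sum.inr uu) ⟨wel i k, hwelmem i k⟩ = 0 := by
        simp [hgunit]
      rw [h2, add_zero] at h0
      exact h0
    · exact hgunit
  -- Step 8: the injection into (Fin m → ZMod p) via the abelianization.
  set rep : Fin m → ↥(U : Subgroup G) :=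
    fun i => Quotient.out (e0.symm (ofAdd (Pi.single i 1))) with hrepdef
  have hrep : ∀ i, (QuotientGroup.mk (rep i) : proAbelianization ↥(U : Subgroup G))
      = e0.symm (ofAdd (Pi.single i 1)) := by
    intro i
    exact QuotientGroup.out_eq' _
  set Λ : LocallyConstant (↥(U : Subgroup G)) (ZMod p) →ₗ[ZMod p] (Fin m → ZMod p) :=
    { toFun := fun f => fun i => f (rep i)
      map_add' := fun f f' => rfl
      map_smul' := fun c f => rfl } with hΛ
  have hkerΛ : ∀ f : LocallyConstant (↥(U : Subgroup G)) (ZMod p),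
      f ∈ oneCocycles p (↥(U : Subgroup G)) → Λ f = 0 → f = 0 := by
    intro f hf hf0
    rw [mem_oneCocycles_iff] at hf
    set fm := cocycleHom (⇑f) hf with hfm
    have hle : (commutator ↥(U : Subgroup G)).topologicalClosure ≤ fm.ker :=
      Subgroup.topologicalClosure_minimal _ (Abelianization.commutator_subset_ker fm)
        (cocycleHom_ker_closed f hf)
    set fbar : proAbelianization ↥(U : Subgroup G) →* Multiplicative (ZMod p) :=
      QuotientGroup.lift _ fm hle with hfbar
    set h' : (Fin m → ℤ_[p]) →+ ZMod p :=
      { toFun := fun w => toAdd (fbar (e0.symm (ofAdd w)))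
        map_zero' := by
          show toAdd (fbar (e0.symm (ofAdd (0 : Fin m → ℤ_[p])))) = 0
          rw [ofAdd_zero, map_one, map_one, toAdd_one]
        map_add' := fun w w' => by
          show toAdd (fbar (e0.symm (ofAdd (w + w'))))
            = toAdd (fbar (e0.symm (ofAdd w))) + toAdd (fbar (e0.symm (ofAdd w')))
          rw [ofAdd_add, map_mul, map_mul, toAdd_mul] } with hh'
    have hsingle : ∀ i, h' (Pi.single i 1) = 0 := by
      intro i
      show toAdd (fbar (e0.symm (ofAdd (Pi.single i 1)))) = 0
      rw [← hrep i, hfbar, QuotientGroup.lift_mk]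
      show toAdd (ofAdd (f (rep i))) = 0
      rw [toAdd_ofAdd]
      exact congrFun hf0 i
    have h0 := padic_hom_eq_zero h' hsingle
    apply DFunLike.ext
    intro u
    have h1 : h' (toAdd (e0 (QuotientGroup.mk u))) = 0 := by rw [h0]; rfl
    have h2 : fbar (QuotientGroup.mk u) = 1 := by
      have h3 : (QuotientGroup.mk u : proAbelianization ↥(U : Subgroup G))
          = e0.symm (ofAdd (toAdd (e0 (QuotientGroup.mk u)))) := by
        rw [ofAdd_toAdd, MulEquiv.symm_apply_apply]
      rw [h3]
      have h4 : toAdd (fbar (e0.symm (ofAdd (toAdd (e0 (QuotientGroup.mk u)))))) = 0 := h1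
      rw [← ofAdd_toAdd (fbar (e0.symm (ofAdd (toAdd (e0 (QuotientGroup.mk u)))))), h4, ofAdd_zero]
    have h5 : ofAdd (f u) = 1 := by
      have h6 : fbar (QuotientGroup.mk u) = ofAdd (f u) := by
        rw [hfbar, QuotientGroup.lift_mk]
        rfl
      rw [← h6]
      exact h2
    have h7 := Multiplicative.ofAdd.injective (h5.trans (ofAdd_zero (α := ZMod p)).symm)
    simpa using h7
  have hdisj : Disjoint (Submodule.span (ZMod p) (Set.range v)) (LinearMap.ker Λ) := by
    rw [Submodule.disjoint_def]
    intro z hz1 hz2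
    have hspan : Submodule.span (ZMod p) (Set.range v) ≤ oneCocycles p (↥(U : Subgroup G)) := by
      rw [Submodule.span_le]
      rintro _ ⟨t, rfl⟩
      exact hvmem t
    exact hkerΛ z (hspan hz1) (LinearMap.mem_ker.mp hz2)
  have hli2 : LinearIndependent (ZMod p) (⇑Λ ∘ v) := hli.map hdisj
  have hcardT : Fintype.card T ≤ m := by
    have h1 := hli2.fintype_card_le_finrank
    rwa [Module.finrank_fin_fun] at h1
  have hTcard : Fintype.card T = (n - 1) * p + 1 := by
    have h1 : Fintype.card {i : Fin n // i ≠ i₀} = n - 1 := by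
      have h2 := Fintype.card_subtype_compl (fun i : Fin n => i = i₀)
      rw [Fintype.card_subtype_eq, Fintype.card_fin] at h2
      exact h2
    show Fintype.card (({i : Fin n // i ≠ i₀} × ZMod p) ⊕ Unit) = (n - 1) * p + 1
    rw [Fintype.card_sum, Fintype.card_prod, ZMod.card, h1]
    simp
  -- Step 9: arithmetic contradiction.
  have hfin1 : (n - 1) * p + 1 ≤ m := by rw [← hTcard]; exact hcardT
  have hn1 : 1 ≤ n := le_trans (by omega) hlam_le_n
  have e1' : (n - 1) * p + p = n * p := by
    have hnn : (n - 1) + 1 = n := by omega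
    calc (n - 1) * p + p = ((n - 1) + 1) * p := by ring
    _ = n * p := by rw [hnn]
  have e2' : lam + (p - 1) * lam = p * lam := by
    have hp1 : (p - 1) + 1 = p := by have := hp.pos; omega
    calc lam + (p - 1) * lam = ((p - 1) + 1) * lam := by ring
    _ = p * lam := by rw [hp1]
  have hchain : n * p + 1 ≤ n * p := by
    calc n * p + 1 = ((n - 1) * p + p) + 1 := by rw [e1']
    _ = ((n - 1) * p + 1) + p := by ring
    _ ≤ m + p := Nat.add_le_add_right hfin1 p
    _ ≤ (lam + 2 * lamF) + p := Nat.add_le_add_right hm p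
    _ = lam + (2 * lamF + p) := by ring
    _ ≤ lam + (p - 1) * lam := Nat.add_le_add_left hineq lam
    _ = p * lam := e2'
    _ ≤ p * n := Nat.mul_le_mul_left p hlam_le_n
    _ = n * p := Nat.mul_comm p n
  exact Nat.not_succ_le_self (n * p) hchain

end MainProof
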